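/- Let M = [[A, C],[C†, B]] be a positive semidefinite 4×4 matrix with 2×2 blocks. If rank(M) ≤ 2, then there exists a unitary 2×2 matrix U with C = A^{1/2} U B^{1/2}. -/

import Mathlib

open Matrix
open scoped ComplexOrder

/-- The positive semidefinite square root of a positive semidefinite matrix
(the definition `Matrix.PosSemidef.sqrt` of the older Mathlib, since removed). -/
noncomputable def Matrix.PosSemidef.sqrt {n : Type*} [Fintype n] [DecidableEq n] {𝕜 : Type*}
    [RCLike 𝕜] {A : Matrix n n 𝕜} (hA : A.PosSemidef) : Matrix n n 𝕜 :=
  hA.1.eigenvectorUnitary.1 * diagonal ((↑) ∘ (√·) ∘ hA.1.eigenvalues) *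
  (star hA.1.eigenvectorUnitary : Matrix n n 𝕜)

section Aux

variable {m n : Type*} [Fintype m] [DecidableEq m] [Fintype n] [DecidableEq n]

/-- A PSD matrix of rank at most `card m` factors as `Xᴴ * X` with `X : Matrix m n ℂ`. -/
lemma psd_rank_factor {M : Matrix n n ℂ} (hM : M.PosSemidef)
    (hrank : M.rank ≤ Fintype.card m) : ∃ X : Matrix m n ℂ, M = Xᴴ * X := by
  classical
  set d : n → ℝ := hM.1.eigenvalues with hd
  set u : Matrix n n ℂ := (hM.1.eigenvectorUnitary : Matrix n n ℂ) with hu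
  set Y : Matrix n n ℂ := diagonal (fun i => (Real.sqrt (d i) : ℂ)) * star u with hY
  have hYY : Yᴴ * Y = M := by
    rw [hY, conjTranspose_mul, star_eq_conjTranspose, conjTranspose_conjTranspose,
      diagonal_conjTranspose]
    have : star (fun i => (Real.sqrt (d i) : ℂ)) = fun i => (Real.sqrt (d i) : ℂ) := by
      funext i
      simp [Pi.star_apply, RCLike.star_def, Complex.conj_ofReal]
    rw [this]
    calc u * diagonal (fun i => (Real.sqrt (d i) : ℂ)) *
          (diagonal (fun i => (Real.sqrt (d i) : ℂ)) * (star u))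
        = u * (diagonal (fun i => (Real.sqrt (d i) : ℂ)) *
            diagonal (fun i => (Real.sqrt (d i) : ℂ))) * star u := by
          simp only [Matrix.mul_assoc]
      _ = u * diagonal (RCLike.ofReal ∘ d) * star u := by
          rw [diagonal_mul_diagonal]
          have hfun : (fun i => (Real.sqrt (d i) : ℂ) * (Real.sqrt (d i) : ℂ))
              = (RCLike.ofReal ∘ d : n → ℂ) := by
            funext i
            rw [Function.comp_apply, ← Complex.ofReal_mul,
              Real.mul_self_sqrt (hM.eigenvalues_nonneg i)]
            rfl
          rw [hfun]
      _ = M := (hM.1.spectral_theorem).symm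
  have hcard : Fintype.card {i // d i ≠ 0} ≤ Fintype.card m := by
    rw [hd, ← hM.1.rank_eq_card_non_zero_eigs]
    exact hrank
  obtain ⟨f⟩ := Function.Embedding.nonempty_of_card_le hcard
  set E : Matrix m n ℂ :=
    Matrix.of (fun k i => if h : d i ≠ 0 then (if f ⟨i, h⟩ = k then 1 else 0) else 0) with hE
  have hEE : Eᴴ * E = diagonal (fun i => if d i ≠ 0 then (1 : ℂ) else 0) := by
    ext i j
    simp only [mul_apply, conjTranspose_apply, hE, Matrix.of_apply, diagonal_apply]
    by_cases hi : d i ≠ 0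
    · by_cases hj : d j ≠ 0
      · simp only [dif_pos hi, dif_pos hj]
        have : ∀ k : m, star (if f ⟨i, hi⟩ = k then (1:ℂ) else 0) *
            (if f ⟨j, hj⟩ = k then (1:ℂ) else 0)
            = if f ⟨j, hj⟩ = k then (if f ⟨i, hi⟩ = k then (1:ℂ) else 0) else 0 := by
          intro k
          by_cases h1 : f ⟨i, hi⟩ = k <;> by_cases h2 : f ⟨j, hj⟩ = k <;>
            simp [h1, h2]
        rw [Finset.sum_congr rfl fun k _ => this k, Finset.sum_ite_eq]
        by_cases hij : i = j
        · subst hij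
          simp [hi]
        · have : f ⟨i, hi⟩ ≠ f ⟨j, hj⟩ := by
            intro h
            exact hij (congrArg Subtype.val (f.injective h))
          simp [this, hij]
      · simp only [dif_neg hj, mul_zero, Finset.sum_const_zero]
        by_cases hij : i = j
        · subst hij; exact absurd hi hj
        · simp [hij]
    · simp only [dif_neg hi, star_zero, zero_mul, Finset.sum_const_zero]
      by_cases hij : i = j
      · subst hij; simp [hi]
      · simp [hij]
  have hEY : Eᴴ * E * Y = Y := by
    rw [hEE]
    ext i j
    rw [diagonal_mul]
    by_cases hi : d i ≠ 0
    · simp [hi]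
    · push_neg at hi
      have : Y i j = 0 := by
        rw [hY, diagonal_mul]
        simp [hi]
      simp [hi, this]
  refine ⟨E * Y, ?_⟩
  rw [conjTranspose_mul, Matrix.mul_assoc, ← Matrix.mul_assoc Eᴴ E Y, hEY, hYY]

/-- Polar decomposition: if `A = Pᴴ * P` is PSD then `P = V * A.sqrt` for a unitary `V`. -/
lemma polar_decomp (P : Matrix n n ℂ) {A : Matrix n n ℂ} (hA : A.PosSemidef)
    (hfac : A = Pᴴ * P) : ∃ V ∈ Matrix.unitaryGroup n ℂ, P = V * hA.sqrt := by
  classical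
  subst hfac
  set d : n → ℝ := hA.1.eigenvalues with hd
  set u : Matrix n n ℂ := (hA.1.eigenvectorUnitary : Matrix n n ℂ) with hu
  have huu : u * star u = 1 := mem_unitaryGroup_iff.mp hA.1.eigenvectorUnitary.2
  have huu' : star u * u = 1 := mem_unitaryGroup_iff'.mp hA.1.eigenvectorUnitary.2
  set Q : Matrix n n ℂ := P * u with hQdef
  have hQ : Qᴴ * Q = diagonal (RCLike.ofReal ∘ d) := by
    rw [hQdef, conjTranspose_mul, star_eq_conjTranspose] at *
    calc uᴴ * Pᴴ * (P * u) = uᴴ * (Pᴴ * P) * u := by simp only [Matrix.mul_assoc]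
      _ = diagonal (RCLike.ofReal ∘ d) := by
          simpa [star_eq_conjTranspose] using hA.1.conjStarAlgAut_star_eigenvectorUnitary
  have hent : ∀ i j, (∑ k, (starRingEnd ℂ) (Q k i) * Q k j)
      = if i = j then (d i : ℂ) else 0 := by
    intro i j
    simpa [mul_apply, conjTranspose_apply, diagonal_apply, RCLike.star_def,
      Function.comp] using congrFun (congrFun hQ i) j
  have hcol0 : ∀ j, d j = 0 → ∀ k, Q k j = 0 := by
    intro j hj k
    have h1 := hent j j
    rw [if_pos rfl, hj, Complex.ofReal_zero] at h1
    have h2 : (∑ k, (Complex.normSq (Q k j) : ℂ)) = 0 := by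
      rw [← h1]
      refine Finset.sum_congr rfl fun k _ => ?_
      rw [Complex.normSq_eq_conj_mul_self]
    have h3 : (∑ k, Complex.normSq (Q k j)) = 0 := by
      exact_mod_cast h2
    have h4 := (Finset.sum_eq_zero_iff_of_nonneg
      (fun k _ => Complex.normSq_nonneg (Q k j))).mp h3 k (Finset.mem_univ k)
    exact Complex.normSq_eq_zero.mp h4
  -- candidate orthonormal columns
  set v : n → EuclideanSpace ℂ n :=
    fun j => ((Real.sqrt (d j) : ℂ))⁻¹ • ((WithLp.equiv 2 (n → ℂ)).symm (fun k => Q k j)) with hv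
  have hvk : ∀ j k, v j k = ((Real.sqrt (d j) : ℂ))⁻¹ * Q k j := by
    intro j k; rfl
  have hortho : Orthonormal ℂ (Set.restrict {j | d j ≠ 0} v) := by
    rw [orthonormal_iff_ite]
    rintro ⟨i, hi⟩ ⟨j, hj⟩
    change inner ℂ (v i) (v j) = _
    have hinner : (inner ℂ (v i) (v j) : ℂ) =
        ((Real.sqrt (d i) : ℂ))⁻¹ * ((Real.sqrt (d j) : ℂ))⁻¹ *
          (∑ k, (starRingEnd ℂ) (Q k i) * Q k j) := by
      rw [PiLp.inner_apply, Finset.mul_sum]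
      refine Finset.sum_congr rfl fun k _ => ?_
      rw [hvk, hvk, RCLike.inner_apply, _root_.map_mul, map_inv₀, Complex.conj_ofReal]
      ring
    rw [hinner, hent]
    by_cases hij : i = j
    · subst hij
      simp only [if_pos rfl, Subtype.mk.injEq]
      have hsq : (Real.sqrt (d i) : ℂ) * (Real.sqrt (d i) : ℂ) = (d i : ℂ) := by
        rw [← Complex.ofReal_mul, Real.mul_self_sqrt (hA.eigenvalues_nonneg i)]
      have hdne : (d i : ℂ) ≠ 0 := by exact_mod_cast hi
      have hsne : (Real.sqrt (d i) : ℂ) ≠ 0 := by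
        intro h
        rw [h, zero_mul] at hsq
        exact hdne hsq.symm
      simp only [if_true]
      rw [← hsq]
      field_simp
    · have : (⟨i, hi⟩ : {j | d j ≠ 0}) ≠ ⟨j, hj⟩ := by
        intro h; exact hij (congrArg Subtype.val h)
      rw [if_neg hij, if_neg this, mul_zero]
  obtain ⟨b, hb⟩ := hortho.exists_orthonormalBasis_extension_of_card_eq
    (by simp [finrank_euclideanSpace])
  set W : Matrix n n ℂ := Matrix.of (fun i j => b j i) with hW
  have hWmem : W ∈ Matrix.unitaryGroup n ℂ := by
    rw [mem_unitaryGroup_iff']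
    ext i j
    have hob := (orthonormal_iff_ite (𝕜 := ℂ)).mp b.orthonormal i j
    rw [PiLp.inner_apply] at hob
    simp only [Matrix.mul_apply, star_apply, conjTranspose_apply, hW, Matrix.of_apply,
      star_eq_conjTranspose, Matrix.one_apply]
    calc (∑ k, star (b i k) * b j k) = ∑ k, (inner ℂ (b i k) (b j k) : ℂ) := by
          refine Finset.sum_congr rfl fun k _ => ?_
          rw [RCLike.inner_apply', RCLike.star_def]
      _ = if i = j then 1 else 0 := hob
  have hQW : Q = W * diagonal (fun j => (Real.sqrt (d j) : ℂ)) := by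
    ext k j
    rw [mul_diagonal]
    simp only [hW, Matrix.of_apply]
    by_cases hj : d j ≠ 0
    · have hbj : b j = v j := hb j hj
      rw [hbj, hvk]
      have hsne : (Real.sqrt (d j) : ℂ) ≠ 0 := by
        have : Real.sqrt (d j) ≠ 0 := by
          rw [Real.sqrt_ne_zero' ]
          exact lt_of_le_of_ne (hA.eigenvalues_nonneg j) (Ne.symm hj)
        exact_mod_cast this
      field_simp
    · push_neg at hj
      rw [hcol0 j hj k, hj]
      simp
  have hsqrt : hA.sqrt = u * diagonal (fun j => (Real.sqrt (d j) : ℂ)) * star u := rfl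
  refine ⟨W * star u, mul_mem hWmem (Unitary.star_mem hA.1.eigenvectorUnitary.2), ?_⟩
  have hP : P = Q * star u := by
    rw [hQdef, Matrix.mul_assoc, huu, Matrix.mul_one]
  rw [hsqrt, hP, hQW]
  calc W * diagonal (fun j => (Real.sqrt (d j) : ℂ)) * star u
      = W * (1 * (diagonal (fun j => (Real.sqrt (d j) : ℂ)) * star u)) := by
        simp only [Matrix.one_mul, Matrix.mul_assoc]
    _ = W * (star u * (u * (diagonal (fun j => (Real.sqrt (d j) : ℂ)) * star u))) := by
        rw [← huu', Matrix.mul_assoc]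
    _ = W * star u * (u * diagonal (fun j => (Real.sqrt (d j) : ℂ)) * star u) := by
        simp only [Matrix.mul_assoc]

end Aux

/-- If `M = [[A, C], [Cᴴ, B]]` is positive semidefinite of rank at most 2, then
`C = A^{1/2} U B^{1/2}` for some unitary `U`. -/
theorem exists_unitary_of_rank_le_two (A B C : Matrix (Fin 2) (Fin 2) ℂ)
    (hA : A.PosSemidef) (hB : B.PosSemidef)
    (hM : (Matrix.fromBlocks A C Cᴴ B).PosSemidef)
    (hrank : (Matrix.fromBlocks A C Cᴴ B).rank ≤ 2) :
    ∃ U : Matrix (Fin 2) (Fin 2) ℂ, U ∈ Matrix.unitaryGroup (Fin 2) ℂ ∧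
      C = hA.sqrt * U * hB.sqrt := by
  obtain ⟨X, hX⟩ := psd_rank_factor (m := Fin 2) hM (by simpa using hrank)
  set P : Matrix (Fin 2) (Fin 2) ℂ := Matrix.of (fun i j => X i (Sum.inl j)) with hP
  set Q : Matrix (Fin 2) (Fin 2) ℂ := Matrix.of (fun i j => X i (Sum.inr j)) with hQ
  have hXPQ : X = fromCols P Q := by
    ext i (j | j) <;> rfl
  rw [hXPQ, conjTranspose_fromCols_eq_fromRows_conjTranspose,
    fromRows_mul_fromCols] at hX
  have hA' : A = Pᴴ * P := by
    have := congrArg Matrix.toBlocks₁₁ hX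
    simpa [Matrix.toBlocks_fromBlocks₁₁] using this
  have hB' : B = Qᴴ * Q := by
    have := congrArg Matrix.toBlocks₂₂ hX
    simpa [Matrix.toBlocks_fromBlocks₂₂] using this
  have hC : C = Pᴴ * Q := by
    have := congrArg Matrix.toBlocks₁₂ hX
    simpa [Matrix.toBlocks_fromBlocks₁₂] using this
  obtain ⟨V₁, hV₁, hPV⟩ := polar_decomp P hA hA'
  obtain ⟨V₂, hV₂, hQV⟩ := polar_decomp Q hB hB'
  refine ⟨star V₁ * V₂, mul_mem (Unitary.star_mem hV₁) hV₂, ?_⟩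
  have hsa : hA.sqrtᴴ = hA.sqrt := by
    unfold Matrix.PosSemidef.sqrt
    rw [conjTranspose_mul, conjTranspose_mul, diagonal_conjTranspose]
    ext i j
    simp [Matrix.mul_assoc, mul_apply, diagonal_apply, star_eq_conjTranspose]
    ring
  rw [hC, hPV, hQV, conjTranspose_mul, hsa]
  simp only [star_eq_conjTranspose, Matrix.mul_assoc]
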